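/- For any density operator ρ_{AB} on ℂ^d ⊗ ℂ^d, the trace distance between its marginals satisfies D(ρ_A, ρ_B) ≤ 2√(Tr(P_as ρ_{AB}) · Tr(P_s ρ_{AB})). -/

import Mathlib

open scoped Matrix Kronecker ComplexOrder

noncomputable section

namespace QEMD

variable {m n : Type*} [Fintype m] [Fintype n] [DecidableEq m] [DecidableEq n]

/-- Total square root: the PSD square root if `A` is PSD, else `0`. -/
def msqrt (A : Matrix n n ℂ) : Matrix n n ℂ :=
  letI := Classical.dec A.PosSemidef
  if h : A.PosSemidef then
    h.1.eigenvectorUnitary.1 * Matrix.diagonal ((↑) ∘ (√·) ∘ h.1.eigenvalues) *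
      (star h.1.eigenvectorUnitary : Matrix n n ℂ)
  else 0

/-- Trace norm `‖A‖₁ = Tr √(AᴴA)`. -/
def traceNorm (A : Matrix n n ℂ) : ℝ :=
  ((msqrt (Aᴴ * A)).trace).re

/-- Trace distance `D(ρ,σ) = ½‖ρ-σ‖₁`. -/
def traceDist (ρ σ : Matrix n n ℂ) : ℝ := traceNorm (ρ - σ) / 2

/-- Fidelity `F(ρ,σ) = Tr √(√ρ σ √ρ)`. -/
def fidelity (ρ σ : Matrix n n ℂ) : ℝ :=
  ((msqrt (msqrt ρ * σ * msqrt ρ)).trace).re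

/-- Density matrix predicate. -/
def IsDensity (ρ : Matrix n n ℂ) : Prop := ρ.PosSemidef ∧ ρ.trace = 1

/-- Projector `|v⟩⟨v|` onto a vector. -/
def proj (v : n → ℂ) : Matrix n n ℂ := Matrix.of fun i j => v i * star (v j)

/-- Partial trace over the first (left) factor. -/
def traceLeft (ρ : Matrix (m × n) (m × n) ℂ) : Matrix n n ℂ :=
  Matrix.of fun i j => ∑ k, ρ (k, i) (k, j)

/-- Partial trace over the second (right) factor. -/
def traceRight (ρ : Matrix (m × n) (m × n) ℂ) : Matrix m m ℂ :=
  Matrix.of fun i j => ∑ k, ρ (i, k) (j, k)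

/-- The swap operator `S|αβ⟩ = |βα⟩` on `ℂ^d ⊗ ℂ^d`. -/
def swap (d : ℕ) : Matrix (Fin d × Fin d) (Fin d × Fin d) ℂ :=
  Matrix.of fun p q => if p.1 = q.2 ∧ p.2 = q.1 then 1 else 0

/-- Projection onto the symmetric subspace, `P_s = (I + S)/2`. -/
def Psym (d : ℕ) : Matrix (Fin d × Fin d) (Fin d × Fin d) ℂ := (2:ℂ)⁻¹ • (1 + swap d)

/-- Projection onto the antisymmetric subspace, `P_as = (I - S)/2`. -/
def Pasym (d : ℕ) : Matrix (Fin d × Fin d) (Fin d × Fin d) ℂ := (2:ℂ)⁻¹ • (1 - swap d)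

/-- `ρAB` is a quantum coupling of `ρA` and `ρB`. -/
def IsCoupling (ρAB : Matrix (m × n) (m × n) ℂ) (ρA : Matrix m m ℂ)
    (ρB : Matrix n n ℂ) : Prop :=
  IsDensity ρAB ∧ traceRight ρAB = ρA ∧ traceLeft ρAB = ρB

/-- The maximally entangled vector `|Φ⟩ = (1/√d) ∑ᵢ |i⟩|i⟩`. -/
def maxEnt (d : ℕ) : Fin d × Fin d → ℂ :=
  fun p => if p.1 = p.2 then ((1 / Real.sqrt d : ℝ) : ℂ) else 0

open scoped MatrixOrder in
lemma msqrt_eq {A : Matrix n n ℂ} (h : A.PosSemidef) : msqrt A = CFC.sqrt A := by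
  rw [msqrt, dif_pos h, CFC.sqrt_eq_cfc, cfc_nnreal_eq_real _ A, h.1.cfc_eq,
    Matrix.IsHermitian.cfc, Unitary.conjStarAlgAut_apply]
  congr 3
  funext i
  simp [h.eigenvalues_nonneg i]

open scoped MatrixOrder

lemma trace_re_nonneg {A : Matrix n n ℂ} (hA : A.PosSemidef) : 0 ≤ (A.trace).re := by
  rw [Matrix.trace]
  have key : ∀ i, 0 ≤ (A i i).re := by
    intro i
    have hs : star (Pi.single i (1:ℂ) : n → ℂ) = Pi.single i 1 := by
      funext j; simp [Pi.single_apply, apply_ite]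
    simpa [hs, Matrix.mulVec_single, single_dotProduct]
      using hA.re_dotProduct_nonneg (Pi.single i 1)
  simpa [Matrix.diag] using Finset.sum_nonneg fun i _ => key i

lemma exists_sign (Δ : Matrix n n ℂ) (h : Δ.IsHermitian) :
    ∃ U : Matrix n n ℂ, Uᴴ = U ∧ U * U = 1 ∧ U * Δ = msqrt (Δᴴ * Δ) := by
  classical
  set V : Matrix n n ℂ := (h.eigenvectorUnitary : Matrix n n ℂ) with hV
  have hVV : V * Vᴴ = 1 := by
    simpa [Matrix.star_eq_conjTranspose] using (Matrix.mem_unitaryGroup_iff).mp h.eigenvectorUnitary.2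
  have hVV' : Vᴴ * V = 1 := by
    simpa [Matrix.star_eq_conjTranspose] using (Matrix.mem_unitaryGroup_iff').mp h.eigenvectorUnitary.2
  set sgn : n → ℂ := fun i => if 0 ≤ h.eigenvalues i then 1 else -1 with hsgn
  set A : Matrix n n ℂ := V * Matrix.diagonal (fun i => ((|h.eigenvalues i| : ℝ) : ℂ)) * Vᴴ with hA
  have hspec : Δ = V * Matrix.diagonal ((↑) ∘ h.eigenvalues) * Vᴴ := h.spectral_theorem
  refine ⟨V * Matrix.diagonal sgn * Vᴴ, ?_, ?_, ?_⟩
  · have : star sgn = sgn := by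
      funext i
      by_cases h0 : 0 ≤ h.eigenvalues i <;> simp [hsgn, h0]
    simp only [Matrix.conjTranspose_mul, Matrix.conjTranspose_conjTranspose,
      Matrix.diagonal_conjTranspose, this, Matrix.mul_assoc]
  · have hd : Matrix.diagonal sgn * Matrix.diagonal sgn = 1 := by
      rw [Matrix.diagonal_mul_diagonal]
      ext i j
      by_cases hij : i = j
      · subst hij
        by_cases h0 : 0 ≤ h.eigenvalues i <;>
          simp [Matrix.diagonal_apply_eq, Matrix.one_apply_eq, hsgn, h0]
      · simp [Matrix.diagonal_apply_ne _ hij, Matrix.one_apply_ne hij]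
    calc V * Matrix.diagonal sgn * Vᴴ * (V * Matrix.diagonal sgn * Vᴴ)
        = V * (Matrix.diagonal sgn * (Vᴴ * V) * Matrix.diagonal sgn) * Vᴴ := by
          simp only [Matrix.mul_assoc]
      _ = 1 := by rw [hVV']; rw [Matrix.mul_one, hd, Matrix.mul_one, hVV]
  · have habs : (V * Matrix.diagonal sgn * Vᴴ) * Δ = A := by
      rw [hspec]
      calc V * Matrix.diagonal sgn * Vᴴ * (V * Matrix.diagonal ((↑) ∘ h.eigenvalues) * Vᴴ)
          = V * (Matrix.diagonal sgn * (Vᴴ * V) * Matrix.diagonal ((↑) ∘ h.eigenvalues)) * Vᴴ := by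
            simp only [Matrix.mul_assoc]
        _ = A := by
            rw [hVV', Matrix.mul_one, Matrix.diagonal_mul_diagonal, hA]
            congr 1
            congr 1
            apply congrArg Matrix.diagonal
            funext i
            rcases le_or_gt 0 (h.eigenvalues i) with h0 | h0
            · simp [hsgn, h0, abs_of_nonneg h0]
            · simp [hsgn, not_le.mpr h0, abs_of_neg h0]
    have hApsd : A.PosSemidef := by
      refine Matrix.PosSemidef.mul_mul_conjTranspose_same ?_ V
      refine Matrix.posSemidef_diagonal_iff.mpr fun i => ?_
      rw [Complex.zero_le_real]
      exact abs_nonneg _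
    have hBpsd : (Δᴴ * Δ).PosSemidef := Matrix.posSemidef_conjTranspose_mul_self Δ
    have hsq : A ^ 2 = Δᴴ * Δ := by
      rw [h.eq, hspec, pow_two, hA]
      calc V * Matrix.diagonal (fun i => ((|h.eigenvalues i| : ℝ) : ℂ)) * Vᴴ *
            (V * Matrix.diagonal (fun i => ((|h.eigenvalues i| : ℝ) : ℂ)) * Vᴴ)
          = V * (Matrix.diagonal (fun i => ((|h.eigenvalues i| : ℝ) : ℂ)) * (Vᴴ * V) *
              Matrix.diagonal (fun i => ((|h.eigenvalues i| : ℝ) : ℂ))) * Vᴴ := by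
            simp only [Matrix.mul_assoc]
        _ = V * (Matrix.diagonal ((↑) ∘ h.eigenvalues) * (Vᴴ * V) *
              Matrix.diagonal ((↑) ∘ h.eigenvalues)) * Vᴴ := by
            simp only [hVV', Matrix.mul_one, Matrix.diagonal_mul_diagonal]
            congr 1
            congr 1
            apply congrArg Matrix.diagonal
            funext i
            simp [← Complex.ofReal_mul, abs_mul_abs_self]
        _ = _ := by simp only [Matrix.mul_assoc]
    rw [habs, msqrt_eq hBpsd]
    rw [← hsq]; exact (CFC.sqrt_sq A hApsd.nonneg).symm
/-- Frobenius Cauchy–Schwarz. -/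
lemma cs_trace (X Y : Matrix n n ℂ) :
    ‖(Xᴴ * Y).trace‖
      ≤ Real.sqrt (((Xᴴ * X).trace).re) * Real.sqrt (((Yᴴ * Y).trace).re) := by
  classical
  have htr : ∀ (Z W : Matrix n n ℂ), (Zᴴ * W).trace = ∑ p : n × n, star (Z p.1 p.2) * W p.1 p.2 := by
    intro Z W
    rw [Matrix.trace]
    simp only [Matrix.diag_apply, Matrix.mul_apply, Matrix.conjTranspose_apply]
    rw [← Finset.univ_product_univ, Finset.sum_product]
    rw [Finset.sum_comm]
  have hsq : ∀ (Z : Matrix n n ℂ), ((Zᴴ * Z).trace).re = ∑ p : n × n, ‖Z p.1 p.2‖ ^ 2 := by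
    intro Z
    rw [htr]
    rw [Complex.re_sum]
    congr 1
    funext p
    rw [← Complex.normSq_eq_norm_sq]
    simp [Complex.star_def, Complex.normSq, Complex.mul_re, mul_comm]
  have h1 : ‖(Xᴴ * Y).trace‖
      ≤ ∑ p : n × n, ‖X p.1 p.2‖ * ‖Y p.1 p.2‖ := by
    rw [htr]
    refine (norm_sum_le _ _).trans ?_
    refine le_of_eq (Finset.sum_congr rfl fun p _ => ?_)
    simp [norm_mul]
  have h2 : (∑ p : n × n, ‖X p.1 p.2‖ * ‖Y p.1 p.2‖) ^ 2
      ≤ (∑ p : n × n, ‖X p.1 p.2‖ ^ 2) * ∑ p : n × n, ‖Y p.1 p.2‖ ^ 2 :=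
    Finset.sum_mul_sq_le_sq_mul_sq _ _ _
  have hsum_nonneg : 0 ≤ ∑ p : n × n, ‖X p.1 p.2‖ * ‖Y p.1 p.2‖ :=
    Finset.sum_nonneg fun p _ => mul_nonneg (norm_nonneg _) (norm_nonneg _)
  rw [hsq, hsq, ← Real.sqrt_mul (Finset.sum_nonneg fun p _ => sq_nonneg _)]
  refine h1.trans ?_
  rw [show (∑ p : n × n, ‖X p.1 p.2‖ * ‖Y p.1 p.2‖)
      = Real.sqrt ((∑ p : n × n, ‖X p.1 p.2‖ * ‖Y p.1 p.2‖) ^ 2) from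
    (Real.sqrt_sq hsum_nonneg).symm]
  exact Real.sqrt_le_sqrt h2
private lemma sum_rot {α β γ M : Type*} [Fintype α] [Fintype β] [Fintype γ] [AddCommMonoid M]
    (f : α → β → γ → M) :
    ∑ a, ∑ b, ∑ c, f a b c = ∑ b, ∑ c, ∑ a, f a b c := by
  rw [Finset.sum_comm]
  exact Finset.sum_congr rfl fun b _ => Finset.sum_comm

lemma swap_mul_apply {d : ℕ} (X : Matrix (Fin d × Fin d) (Fin d × Fin d) ℂ) (p q : Fin d × Fin d) :
    (swap d * X) p q = X (p.2, p.1) q := by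
  rw [Matrix.mul_apply]
  rw [show (∑ r, swap d p r * X r q) = ∑ r : Fin d × Fin d, if r = (p.2, p.1) then X r q else 0 by
    refine Finset.sum_congr rfl fun r _ => ?_
    by_cases hr : r = (p.2, p.1)
    · subst hr; simp [swap]
    · have : ¬(p.1 = r.2 ∧ p.2 = r.1) := by
        intro ⟨h1, h2⟩; exact hr (Prod.ext h2.symm h1.symm)
      simp [swap, this, hr]]
  simp

lemma mul_swap_apply {d : ℕ} (X : Matrix (Fin d × Fin d) (Fin d × Fin d) ℂ) (p q : Fin d × Fin d) :
    (X * swap d) p q = X p (q.2, q.1) := by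
  rw [Matrix.mul_apply]
  rw [show (∑ r, X p r * swap d r q) = ∑ r : Fin d × Fin d, if r = (q.2, q.1) then X p r else 0 by
    refine Finset.sum_congr rfl fun r _ => ?_
    by_cases hr : r = (q.2, q.1)
    · subst hr; simp [swap]
    · have : ¬(r.1 = q.2 ∧ r.2 = q.1) := by
        intro ⟨h1, h2⟩; exact hr (Prod.ext h1 h2)
      simp [swap, this, hr]]
  simp

lemma swap_conjTranspose {d : ℕ} : (swap d)ᴴ = swap d := by
  ext p q
  simp only [Matrix.conjTranspose_apply, swap, Matrix.of_apply]
  by_cases hc : p.1 = q.2 ∧ p.2 = q.1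
  · rw [if_pos hc, if_pos ⟨hc.2.symm, hc.1.symm⟩]; simp
  · rw [if_neg hc, if_neg fun h => hc ⟨h.2.symm, h.1.symm⟩]; simp

lemma swap_mul_swap {d : ℕ} : swap d * swap d = 1 := by
  ext p q
  rw [swap_mul_apply]
  simp only [swap, Matrix.of_apply, Matrix.one_apply]
  by_cases hpq : p = q
  · subst hpq; simp
  · rw [if_neg fun h => hpq (Prod.ext h.2 h.1), if_neg hpq]

lemma swap_conj_kron {d : ℕ} (A B : Matrix (Fin d) (Fin d) ℂ) :
    swap d * (A ⊗ₖ B) * swap d = B ⊗ₖ A := by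
  ext p q
  rw [mul_swap_apply, swap_mul_apply]
  simp [Matrix.kroneckerMap_apply, mul_comm]

lemma kron_conjTranspose {d : ℕ} (A B : Matrix (Fin d) (Fin d) ℂ) :
    (A ⊗ₖ B)ᴴ = Aᴴ ⊗ₖ Bᴴ := by
  ext p q
  simp [Matrix.conjTranspose_apply, Matrix.kroneckerMap_apply, star_mul, mul_comm]

lemma trace_kron_one_mul {d : ℕ} (A : Matrix (Fin d) (Fin d) ℂ)
    (ρ : Matrix (Fin d × Fin d) (Fin d × Fin d) ℂ) :
    ((A ⊗ₖ (1 : Matrix (Fin d) (Fin d) ℂ)) * ρ).trace = (A * traceRight ρ).trace := by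
  simp only [Matrix.trace, Matrix.diag_apply, Matrix.mul_apply, traceRight, Matrix.of_apply,
    Matrix.kroneckerMap_apply, Matrix.one_apply, ← Finset.univ_product_univ, Finset.sum_product,
    ite_mul, mul_ite, zero_mul, mul_zero, one_mul, mul_one, Finset.sum_ite_eq,
    Finset.sum_ite_eq', Finset.mem_univ, if_true, Finset.mul_sum, Finset.sum_ite_irrel,
    Finset.sum_const_zero]
  exact Finset.sum_congr rfl fun x _ => Finset.sum_comm

lemma trace_one_kron_mul {d : ℕ} (A : Matrix (Fin d) (Fin d) ℂ)
    (ρ : Matrix (Fin d × Fin d) (Fin d × Fin d) ℂ) :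
    (((1 : Matrix (Fin d) (Fin d) ℂ) ⊗ₖ A) * ρ).trace = (A * traceLeft ρ).trace := by
  simp only [Matrix.trace, Matrix.diag_apply, Matrix.mul_apply, traceLeft, Matrix.of_apply,
    Matrix.kroneckerMap_apply, Matrix.one_apply, ← Finset.univ_product_univ, Finset.sum_product,
    ite_mul, mul_ite, zero_mul, mul_zero, one_mul, mul_one, Finset.sum_ite_eq,
    Finset.sum_ite_eq', Finset.mem_univ, if_true, Finset.mul_sum, Finset.sum_ite_irrel,
    Finset.sum_const_zero]
  exact sum_rot fun a b c => A b c * ρ (a, c) (a, b)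
lemma Psym_herm {d : ℕ} : (Psym d)ᴴ = Psym d := by
  simp only [Psym, Matrix.conjTranspose_smul, Matrix.conjTranspose_add,
    Matrix.conjTranspose_one, swap_conjTranspose]
  congr 1
  simp [Complex.ext_iff]

lemma Pasym_herm {d : ℕ} : (Pasym d)ᴴ = Pasym d := by
  simp only [Pasym, Matrix.conjTranspose_smul, Matrix.conjTranspose_sub,
    Matrix.conjTranspose_one, swap_conjTranspose]
  congr 1
  simp [Complex.ext_iff]

lemma Psym_idem {d : ℕ} : Psym d * Psym d = Psym d := by
  have h : (1 + swap d) * (1 + swap d) = (2:ℂ) • (1 + swap d) := by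
    rw [mul_add, add_mul, add_mul, one_mul, one_mul, mul_one, swap_mul_swap]
    module
  simp only [Psym, smul_mul_assoc, mul_smul_comm, smul_smul, h]
  module

lemma Pasym_idem {d : ℕ} : Pasym d * Pasym d = Pasym d := by
  have h : (1 - swap d) * (1 - swap d) = (2:ℂ) • (1 - swap d) := by
    rw [mul_sub, sub_mul, sub_mul, one_mul, one_mul, mul_one, swap_mul_swap]
    module
  simp only [Pasym, smul_mul_assoc, mul_smul_comm, smul_smul, h]
  module

lemma decomp {d : ℕ} (ρ : Matrix (Fin d × Fin d) (Fin d × Fin d) ℂ) :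
    ρ - swap d * ρ * swap d = (2:ℂ) • (Psym d * ρ * Pasym d + Pasym d * ρ * Psym d) := by
  have h2 : Psym d * ρ * Pasym d + Pasym d * ρ * Psym d
      = ((2:ℂ)⁻¹ * (2:ℂ)⁻¹) • ((1 + swap d) * ρ * (1 - swap d)
          + (1 - swap d) * ρ * (1 + swap d)) := by
    simp only [Psym, Pasym, smul_mul_assoc, mul_smul_comm, smul_smul]
    rw [smul_add]
  have hcore : (1 + swap d) * ρ * (1 - swap d) + (1 - swap d) * ρ * (1 + swap d)
      = ρ + ρ - (swap d * ρ * swap d + swap d * ρ * swap d) := by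
    noncomm_ring
  rw [h2, hcore]
  module

lemma traceRight_herm {ρ : Matrix (m × n) (m × n) ℂ} (h : ρ.IsHermitian) :
    (traceRight ρ).IsHermitian := by
  show (traceRight ρ)ᴴ = traceRight ρ
  ext i j
  simp only [Matrix.conjTranspose_apply, traceRight, Matrix.of_apply, star_sum]
  exact Finset.sum_congr rfl fun k _ => h.apply _ _

lemma traceLeft_herm {ρ : Matrix (m × n) (m × n) ℂ} (h : ρ.IsHermitian) :
    (traceLeft ρ).IsHermitian := by
  show (traceLeft ρ)ᴴ = traceLeft ρ
  ext i j
  simp only [Matrix.conjTranspose_apply, traceLeft, Matrix.of_apply, star_sum]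
  exact Finset.sum_congr rfl fun k _ => h.apply _ _
theorem stmt4 (d : ℕ) (ρ : Matrix (Fin d × Fin d) (Fin d × Fin d) ℂ)
    (hρ : IsDensity ρ) :
    traceDist (traceRight ρ) (traceLeft ρ)
      ≤ 2 * Real.sqrt (((Pasym d * ρ).trace).re * ((Psym d * ρ).trace).re) := by
  classical
  obtain ⟨hpsd, -⟩ := hρ
  have hρH : ρᴴ = ρ := hpsd.1
  set Δ : Matrix (Fin d) (Fin d) ℂ := traceRight ρ - traceLeft ρ with hΔdef
  have hΔH : Δ.IsHermitian := (traceRight_herm hpsd.1).sub (traceLeft_herm hpsd.1)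
  obtain ⟨U, hUH, hU2, hUΔ⟩ := exists_sign Δ hΔH
  set R : Matrix (Fin d × Fin d) (Fin d × Fin d) ℂ := msqrt ρ with hRdef
  have hR : R * R = ρ := by rw [hRdef, msqrt_eq hpsd]; exact CFC.sqrt_mul_sqrt_self ρ hpsd.nonneg
  have hRH : Rᴴ = R := by rw [hRdef, msqrt_eq hpsd]; exact (Matrix.nonneg_iff_posSemidef.mp (CFC.sqrt_nonneg ρ)).1
  set M : Matrix (Fin d × Fin d) (Fin d × Fin d) ℂ :=
    U ⊗ₖ (1 : Matrix (Fin d) (Fin d) ℂ) - (1 : Matrix (Fin d) (Fin d) ℂ) ⊗ₖ U with hMdef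
  have hMH : Mᴴ = M := by
    rw [hMdef, Matrix.conjTranspose_sub, kron_conjTranspose, kron_conjTranspose,
      Matrix.conjTranspose_one, hUH]
  set X : Matrix (Fin d × Fin d) (Fin d × Fin d) ℂ := Pasym d * R with hXdef
  set Y : Matrix (Fin d × Fin d) (Fin d × Fin d) ℂ := M * (Psym d * R) with hYdef
  set E : Matrix (Fin d × Fin d) (Fin d × Fin d) ℂ := Psym d * R with hEdef
  set T : ℂ := ((Pasym d * M * Psym d) * ρ).trace with hTdef
  have hXH : Xᴴ = R * Pasym d := by rw [hXdef, Matrix.conjTranspose_mul, hRH, Pasym_herm]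
  have hEH : Eᴴ = R * Psym d := by rw [hEdef, Matrix.conjTranspose_mul, hRH, Psym_herm]
  have hYH : Yᴴ = R * Psym d * M := by
    rw [hYdef, Matrix.conjTranspose_mul, Matrix.conjTranspose_mul, hRH, Psym_herm, hMH,
      Matrix.mul_assoc]
  -- trace identities
  have hXY : (Xᴴ * Y).trace = T := by
    rw [hXH, hYdef, hTdef]
    rw [show R * Pasym d * (M * (Psym d * R)) = R * (Pasym d * M * Psym d * R) by
      simp only [Matrix.mul_assoc]]
    rw [Matrix.trace_mul_comm]
    rw [show Pasym d * M * Psym d * R * R = Pasym d * M * Psym d * (R * R) by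
      simp only [Matrix.mul_assoc]]
    rw [hR]
  have hXX : (Xᴴ * X).trace = (Pasym d * ρ).trace := by
    rw [hXH, hXdef]
    rw [show R * Pasym d * (Pasym d * R) = R * (Pasym d * Pasym d * R) by
      simp only [Matrix.mul_assoc]]
    rw [Matrix.trace_mul_comm, Pasym_idem]
    rw [show Pasym d * R * R = Pasym d * (R * R) by simp only [Matrix.mul_assoc]]
    rw [hR]
  have hEE : (Eᴴ * E).trace = (Psym d * ρ).trace := by
    rw [hEH, hEdef]
    rw [show R * Psym d * (Psym d * R) = R * (Psym d * Psym d * R) by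
      simp only [Matrix.mul_assoc]]
    rw [Matrix.trace_mul_comm, Psym_idem]
    rw [show Psym d * R * R = Psym d * (R * R) by simp only [Matrix.mul_assoc]]
    rw [hR]
  have ha0 : 0 ≤ ((Pasym d * ρ).trace).re := by
    rw [← hXX]; exact trace_re_nonneg (Matrix.posSemidef_conjTranspose_mul_self X)
  have hs0 : 0 ≤ ((Psym d * ρ).trace).re := by
    rw [← hEE]; exact trace_re_nonneg (Matrix.posSemidef_conjTranspose_mul_self E)
  -- the M*M bound
  have hMM : M * M = (2:ℂ) • (1 : Matrix (Fin d × Fin d) (Fin d × Fin d) ℂ)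
      - (2:ℂ) • (U ⊗ₖ U) := by
    rw [hMdef]
    rw [Matrix.sub_mul, Matrix.mul_sub, Matrix.mul_sub]
    simp only [← Matrix.mul_kronecker_mul]
    simp only [hU2, Matrix.one_mul, Matrix.mul_one, Matrix.one_kronecker_one]
    module
  have hCeq : (4:ℂ) • (1 : Matrix (Fin d × Fin d) (Fin d × Fin d) ℂ) - M * M
      = (1 + U ⊗ₖ U)ᴴ * (1 + U ⊗ₖ U) := by
    have hVH : (U ⊗ₖ U)ᴴ = U ⊗ₖ U := by rw [kron_conjTranspose, hUH]
    have hVV : (U ⊗ₖ U) * (U ⊗ₖ U) = 1 := by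
      rw [← Matrix.mul_kronecker_mul, hU2, Matrix.one_kronecker_one]
    rw [Matrix.conjTranspose_add, Matrix.conjTranspose_one, hVH, hMM,
      Matrix.add_mul, Matrix.mul_add, Matrix.mul_add]
    simp only [Matrix.one_mul, Matrix.mul_one, hVV]
    module
  have hCpsd : ((4:ℂ) • (1 : Matrix (Fin d × Fin d) (Fin d × Fin d) ℂ) - M * M).PosSemidef := by
    rw [hCeq]; exact Matrix.posSemidef_conjTranspose_mul_self _
  -- re (YᴴY) ≤ 4 s
  have hYY : ((Yᴴ * Y).trace).re ≤ 4 * ((Psym d * ρ).trace).re := by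
    have h1 : Eᴴ * ((4:ℂ) • (1 : Matrix (Fin d × Fin d) (Fin d × Fin d) ℂ)) * E
        = (4:ℂ) • (Eᴴ * E) := by
      rw [mul_smul_comm, Matrix.mul_one, smul_mul_assoc]
    have h2 : Yᴴ * Y = Eᴴ * (M * M) * E := by
      rw [hYH, hYdef, hEH, hEdef]; simp only [Matrix.mul_assoc]
    have hsplit : Eᴴ * ((4:ℂ) • (1 : Matrix (Fin d × Fin d) (Fin d × Fin d) ℂ) - M * M) * E
        = (4:ℂ) • (Eᴴ * E) - Yᴴ * Y := by
      rw [Matrix.mul_sub, Matrix.sub_mul, h1, h2]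
    have hpos := trace_re_nonneg (hCpsd.conjTranspose_mul_mul_same E)
    rw [hsplit, Matrix.trace_sub, Matrix.trace_smul, hEE] at hpos
    rw [Complex.sub_re, smul_eq_mul] at hpos
    have h4 : ((4:ℂ) * (Psym d * ρ).trace).re = 4 * ((Psym d * ρ).trace).re := by
      simp [Complex.mul_re]
    rw [h4] at hpos
    linarith
  -- trace of M * (ρ - SρS) two ways
  have h3 : ((U ⊗ₖ (1 : Matrix (Fin d) (Fin d) ℂ)) * (swap d * ρ * swap d)).trace
      = (U * traceLeft ρ).trace := by
    rw [show (U ⊗ₖ (1 : Matrix (Fin d) (Fin d) ℂ)) * (swap d * ρ * swap d)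
        = ((U ⊗ₖ (1 : Matrix (Fin d) (Fin d) ℂ)) * swap d * ρ) * swap d by
      simp only [Matrix.mul_assoc]]
    rw [Matrix.trace_mul_comm]
    rw [show swap d * ((U ⊗ₖ (1 : Matrix (Fin d) (Fin d) ℂ)) * swap d * ρ)
        = (swap d * (U ⊗ₖ (1 : Matrix (Fin d) (Fin d) ℂ)) * swap d) * ρ by
      simp only [Matrix.mul_assoc]]
    rw [swap_conj_kron, trace_one_kron_mul]
  have h4 : (((1 : Matrix (Fin d) (Fin d) ℂ) ⊗ₖ U) * (swap d * ρ * swap d)).trace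
      = (U * traceRight ρ).trace := by
    rw [show ((1 : Matrix (Fin d) (Fin d) ℂ) ⊗ₖ U) * (swap d * ρ * swap d)
        = (((1 : Matrix (Fin d) (Fin d) ℂ) ⊗ₖ U) * swap d * ρ) * swap d by
      simp only [Matrix.mul_assoc]]
    rw [Matrix.trace_mul_comm]
    rw [show swap d * (((1 : Matrix (Fin d) (Fin d) ℂ) ⊗ₖ U) * swap d * ρ)
        = (swap d * ((1 : Matrix (Fin d) (Fin d) ℂ) ⊗ₖ U) * swap d) * ρ by
      simp only [Matrix.mul_assoc]]
    rw [swap_conj_kron, trace_kron_one_mul]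
  have hway1 : (M * (ρ - swap d * ρ * swap d)).trace = 2 * (U * Δ).trace := by
    rw [Matrix.mul_sub, Matrix.trace_sub, hMdef, Matrix.sub_mul, Matrix.sub_mul,
      Matrix.trace_sub, Matrix.trace_sub, trace_kron_one_mul, trace_one_kron_mul, h3, h4,
      hΔdef, Matrix.mul_sub, Matrix.trace_sub]
    ring
  have tA : (M * (Psym d * ρ * Pasym d)).trace = T := by
    rw [show M * (Psym d * ρ * Pasym d) = M * (Psym d * ρ) * Pasym d by
      simp only [Matrix.mul_assoc]]
    rw [Matrix.trace_mul_cycle, hTdef]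
    rw [show Pasym d * M * (Psym d * ρ) = Pasym d * M * Psym d * ρ by
      simp only [Matrix.mul_assoc]]
  have tB : (M * (Pasym d * ρ * Psym d)).trace = star T := by
    have hsT : star T = ((Pasym d * M * Psym d * ρ)ᴴ).trace := by
      rw [Matrix.trace_conjTranspose, hTdef]
    rw [hsT]
    simp only [Matrix.conjTranspose_mul, hMH, hρH, Psym_herm, Pasym_herm]
    rw [Matrix.trace_mul_comm]
    rw [show Pasym d * ρ * Psym d * M = Pasym d * (ρ * Psym d * M) by
      simp only [Matrix.mul_assoc]]
    rw [Matrix.trace_mul_comm]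
    rw [show ρ * Psym d * M * Pasym d = ρ * (Psym d * (M * Pasym d)) by
      simp only [Matrix.mul_assoc]]
  have hway2 : (M * (ρ - swap d * ρ * swap d)).trace = 2 * (T + star T) := by
    rw [decomp, mul_smul_comm, Matrix.trace_smul, smul_eq_mul, Matrix.mul_add,
      Matrix.trace_add, tA, tB]
  have hTsum : (U * Δ).trace = T + star T :=
    mul_left_cancel₀ two_ne_zero (hway1.symm.trans hway2)
  -- assemble
  have hdist : traceDist (traceRight ρ) (traceLeft ρ) = T.re := by
    rw [traceDist, traceNorm, ← hΔdef, ← hUΔ, hTsum]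
    have : (star T).re = T.re := rfl
    rw [Complex.add_re, this]
    ring
  rw [hdist]
  have habs : ‖T‖ ≤ 2 * Real.sqrt (((Pasym d * ρ).trace).re
      * ((Psym d * ρ).trace).re) := by
    have hcs := cs_trace X Y
    rw [hXY, hXX] at hcs
    have hstep : Real.sqrt (((Yᴴ * Y).trace).re)
        ≤ Real.sqrt (4 * ((Psym d * ρ).trace).re) := Real.sqrt_le_sqrt hYY
    have h42 : Real.sqrt (4 * ((Psym d * ρ).trace).re)
        = 2 * Real.sqrt (((Psym d * ρ).trace).re) := by
      rw [Real.sqrt_mul (by norm_num : (0:ℝ) ≤ 4)]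
      congr 1
      rw [show (4:ℝ) = 2 ^ 2 by norm_num]
      exact Real.sqrt_sq (by norm_num)
    calc ‖T‖
        ≤ Real.sqrt (((Pasym d * ρ).trace).re) * Real.sqrt (((Yᴴ * Y).trace).re) := hcs
      _ ≤ Real.sqrt (((Pasym d * ρ).trace).re)
            * (2 * Real.sqrt (((Psym d * ρ).trace).re)) := by
          rw [← h42]
          exact mul_le_mul_of_nonneg_left hstep (Real.sqrt_nonneg _)
      _ = 2 * (Real.sqrt (((Pasym d * ρ).trace).re) * Real.sqrt (((Psym d * ρ).trace).re)) := by
          ring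
      _ = 2 * Real.sqrt (((Pasym d * ρ).trace).re * ((Psym d * ρ).trace).re) := by
          rw [Real.sqrt_mul ha0]
  exact (Complex.re_le_norm T).trans habs
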